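/- For a basic tree T with 2n vertices whose double direction is D, the complex of directed trees Δ(D) is homotopy equivalent to the sphere S^{n-1}. -/

import Mathlib

/-- `IsDipath T a b p` : `p` is the list of successive vertices (after `a`) of a
directed path from `a` to `b` using edges of the relation `T`. -/
def IsDipath {V : Type} (T : V → V → Prop) : V → V → List V → Prop
  | a, b, [] => a = b
  | a, b, c :: p => T a c ∧ IsDipath T c b p

/-- `T` is a spanning directed rooted tree of the digraph `E` with root `r`:
its edges are edges of `E` and every vertex is reached by a unique directed path from `r`. -/
def IsSpanningDitree {V : Type} (E T : V → V → Prop) (r : V) : Prop :=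
  (∀ x y, T x y → E x y) ∧ ∀ x : V, ∃! p : List V, IsDipath T r x p

/-- The edge relation associated to a finite set of directed edges. -/
def edgeRel {V : Type} [DecidableEq V] (F : Finset (V × V)) : V → V → Prop :=
  fun x y => (x, y) ∈ F

/-- A finite set of directed edges is a directed forest in the digraph `E`:
all edges belong to `E`, every vertex has in-degree at most one, and there are
no directed cycles.  (Equivalently, it is a disjoint union of directed rooted trees.) -/
def IsDirectedForest {V : Type} [DecidableEq V] (E : V → V → Prop) (F : Finset (V × V)) : Prop :=
  (∀ e ∈ F, E e.1 e.2) ∧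
  (∀ x y y' : V, (y, x) ∈ F → (y', x) ∈ F → y = y') ∧
  ∀ (x : V) (p : List V), p ≠ [] → ¬ IsDipath (edgeRel F) x x p

/-- A facet of the complex of directed trees `Δ(E)`: a maximal directed forest. -/
def IsFacet {V : Type} [DecidableEq V] (E : V → V → Prop) (F : Finset (V × V)) : Prop :=
  IsDirectedForest E F ∧ ∀ F', IsDirectedForest E F' → F ⊆ F' → F' = F

/-- The geometric realization of an abstract simplicial complex `K` on a finite vertex
set `α`: convex combinations of vertices whose support is (contained in) a face of `K`. -/
def geomRealization {α : Type} [Fintype α] (K : Finset α → Prop) : Set (α → ℝ) :=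
  {f | (∀ a : α, 0 ≤ f a) ∧ (∑ a : α, f a) = 1 ∧
    ∃ F : Finset α, K F ∧ ∀ a : α, f a ≠ 0 → a ∈ F}

section BasicTree

variable {V : Type} [Fintype V] [DecidableEq V]

/-- Hypotheses describing a basic tree with `2n` vertices: a tree `G` whose vertex set is
the disjoint union of the leaves `v 0, …, v (n-1)` (vertices of degree `1`) and the
non-leaves `u 0, …, u (n-1)`, with `v i` adjacent to `u i` (so every non-leaf is adjacent
to exactly one leaf). -/
structure IsBasicTree (n : ℕ) (G : SimpleGraph V) [DecidableRel G.Adj]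
    (v u : Fin n → V) : Prop where
  isTree : G.IsTree
  bij : Function.Bijective (Sum.elim v u : Fin n ⊕ Fin n → V)
  adj : ∀ i : Fin n, G.Adj (v i) (u i)
  leaf : ∀ i : Fin n, G.degree (v i) = 1
  nonleaf : ∀ i : Fin n, 2 ≤ n → G.degree (u i) ≠ 1

end BasicTree


set_option linter.unusedSectionVars false
set_option linter.unusedVariables false
set_option maxHeartbeats 1000000

namespace ForestSphereAux

variable {V : Type} [Fintype V] [DecidableEq V]

/-- transfer of directed paths: if every arc of `F'` followed by another arc lies in `F`,
then any dipath in `F'` ending at a non-sink vertex is a dipath in `F`. -/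
lemma dipath_transfer {F F' : Finset (V × V)}
    (h : ∀ a c, (a, c) ∈ F' → (∃ d, (c, d) ∈ F') → (a, c) ∈ F) :
    ∀ (p : List V) (a x : V), IsDipath (edgeRel F') a x p → (∃ z, (x, z) ∈ F') →
      IsDipath (edgeRel F) a x p := by
  intro p
  induction p with
  | nil => intro a x hp _; exact hp
  | cons c q ih =>
    intro a x hp hout
    obtain ⟨hac, hq⟩ := hp
    cases q with
    | nil =>
      have hcx : c = x := hq
      subst hcx
      exact ⟨h a c hac hout, hq⟩
    | cons d r =>
      have hcd : (c, d) ∈ F' := hq.1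
      exact ⟨h a c hac ⟨d, hcd⟩, ih c x hq hout⟩

/-- no closed dipaths in `F'` given none in `F` and the sink-transfer property. -/
lemma no_closed_transfer {F F' : Finset (V × V)}
    (hF : ∀ (x : V) (p : List V), p ≠ [] → ¬ IsDipath (edgeRel F) x x p)
    (h : ∀ a c, (a, c) ∈ F' → (∃ d, (c, d) ∈ F') → (a, c) ∈ F) :
    ∀ (x : V) (p : List V), p ≠ [] → ¬ IsDipath (edgeRel F') x x p := by
  intro x p hne hp
  cases p with
  | nil => exact hne rfl
  | cons c q =>
    have hout : ∃ z, (x, z) ∈ F' := ⟨c, hp.1⟩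
    exact hF x (c :: q) hne (dipath_transfer h (c :: q) x x hp hout)

/-- a 2-cycle is impossible in a directed forest -/
lemma no_two_cycle {E : V → V → Prop} {F : Finset (V × V)} (hF : IsDirectedForest E F)
    {a b : V} (h1 : (a, b) ∈ F) (h2 : (b, a) ∈ F) : False :=
  hF.2.2 a [b, a] (by simp) ⟨h1, h2, rfl⟩

end ForestSphereAux

namespace FS2

variable {V : Type} [Fintype V] [DecidableEq V] {n : ℕ} {G : SimpleGraph V} [DecidableRel G.Adj]
  {v u : Fin n → V}

lemma vu_ne (hb : IsBasicTree n G v u) (i j : Fin n) : v i ≠ u j := fun h =>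
  Sum.inl_ne_inr (hb.bij.injective (h : Sum.elim v u (Sum.inl i) = Sum.elim v u (Sum.inr j)))

lemma v_inj (hb : IsBasicTree n G v u) : Function.Injective v := fun i j h =>
  Sum.inl_injective (hb.bij.injective (h : Sum.elim v u (Sum.inl i) = Sum.elim v u (Sum.inl j)))

lemma u_inj (hb : IsBasicTree n G v u) : Function.Injective u := fun i j h =>
  Sum.inr_injective (hb.bij.injective (h : Sum.elim v u (Sum.inr i) = Sum.elim v u (Sum.inr j)))

lemma adj_leaf (hb : IsBasicTree n G v u) {x : V} {j : Fin n} (h : G.Adj x (v j)) : x = u j := by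
  have h1 : x ∈ G.neighborFinset (v j) := by
    rw [SimpleGraph.mem_neighborFinset]; exact h.symm
  have h2 : u j ∈ G.neighborFinset (v j) := by
    rw [SimpleGraph.mem_neighborFinset]; exact hb.adj j
  have hc : (G.neighborFinset (v j)).card = 1 := hb.leaf j
  obtain ⟨a, ha⟩ := Finset.card_eq_one.mp hc
  rw [ha, Finset.mem_singleton] at h1 h2
  rw [h1, h2]

lemma leaf_adj (hb : IsBasicTree n G v u) {x : V} {j : Fin n} (h : G.Adj (v j) x) : x = u j :=
  adj_leaf hb h.symm

lemma sum_V (hb : IsBasicTree n G v u) (h : V → ℝ) :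
    ∑ x : V, h x = (∑ j, h (v j)) + ∑ j, h (u j) := by
  rw [← Function.Bijective.sum_comp hb.bij h, Fintype.sum_sum_type]
  rfl

lemma cases_V (hb : IsBasicTree n G v u) (x : V) : (∃ j, x = v j) ∨ ∃ j, x = u j := by
  obtain ⟨s, hs⟩ := hb.bij.surjective x
  cases s with
  | inl j => exact Or.inl ⟨j, hs.symm⟩
  | inr j => exact Or.inr ⟨j, hs.symm⟩

end FS2

namespace FS3

variable {V : Type} [Fintype V] [DecidableEq V] {n : ℕ}

lemma max_sub_max (a : ℝ) : max a 0 - max (-a) 0 = a := by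
  rcases le_total a 0 with h | h
  · rw [max_eq_right h, max_eq_left (by linarith)]; ring
  · rw [max_eq_left h, max_eq_right (by linarith)]; ring

lemma max_add_max (a : ℝ) : max a 0 + max (-a) 0 = |a| := by
  rcases le_total a 0 with h | h
  · rw [max_eq_right h, max_eq_left (by linarith), abs_of_nonpos h]; ring
  · rw [max_eq_left h, max_eq_right (by linarith), abs_of_nonneg h]; ring

lemma max_compl {a b : ℝ} (ha : 0 ≤ a) (hb : 0 ≤ b) (h : a = 0 ∨ b = 0) :
    max (a - b) 0 = a ∧ max (-(a - b)) 0 = b := by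
  rcases h with h | h <;> subst h
  · constructor
    · rw [max_eq_right (by linarith)]
    · rw [max_eq_left (by linarith)]; ring
  · constructor
    · rw [max_eq_left (by linarith)]; ring
    · rw [max_eq_right (by linarith)]

/-- the generic "pendant indicator sum" -/
def indSum (v u : Fin n → V) (t s : Fin n → ℝ) (c : V × V) : ℝ :=
  ∑ j, ((if c = (v j, u j) then t j else 0) + (if c = (u j, v j) then s j else 0))

section eval

variable {v u : Fin n → V}

lemma pair_ne_vu {hvu : ∀ i j, v i ≠ u j} {x y : V} {j : Fin n} (h : x ≠ v j ∨ y ≠ u j) :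
    (x, y) ≠ ((v j : V), u j) := by
  intro hp
  rw [Prod.ext_iff] at hp
  rcases h with h | h
  · exact h hp.1
  · exact h hp.2

lemma indSum_vu (hv : Function.Injective v) (hvu : ∀ i j, v i ≠ u j) (t s : Fin n → ℝ)
    (k : Fin n) : indSum v u t s (v k, u k) = t k := by
  unfold indSum
  rw [Finset.sum_add_distrib]
  have h1 : ∀ j ∈ Finset.univ, (if ((v k : V), (u k : V)) = (v j, u j) then t j else 0)
      = if j = k then t j else 0 := by
    intro j _
    congr 1
    rw [Prod.ext_iff]
    simp only [eq_iff_iff]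
    constructor
    · rintro ⟨h1, -⟩; exact (hv h1).symm
    · rintro rfl; exact ⟨rfl, rfl⟩
  have h2 : ∀ j ∈ Finset.univ, (if ((v k : V), (u k : V)) = (u j, v j) then s j else 0) = 0 := by
    intro j _
    rw [if_neg]
    rw [Prod.ext_iff]
    rintro ⟨h1, -⟩
    exact hvu k j h1
  rw [Finset.sum_congr rfl h1, Finset.sum_congr rfl h2, Finset.sum_ite_eq' Finset.univ k t]
  simp

lemma indSum_uv (hu : Function.Injective u) (hvu : ∀ i j, v i ≠ u j) (t s : Fin n → ℝ)
    (k : Fin n) : indSum v u t s (u k, v k) = s k := by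
  unfold indSum
  rw [Finset.sum_add_distrib]
  have h1 : ∀ j ∈ Finset.univ, (if ((u k : V), (v k : V)) = (v j, u j) then t j else 0) = 0 := by
    intro j _
    rw [if_neg]
    rw [Prod.ext_iff]
    rintro ⟨h1, -⟩
    exact hvu j k h1.symm
  have h2 : ∀ j ∈ Finset.univ, (if ((u k : V), (v k : V)) = (u j, v j) then s j else 0)
      = if j = k then s j else 0 := by
    intro j _
    congr 1
    rw [Prod.ext_iff]
    simp only [eq_iff_iff]
    constructor
    · rintro ⟨h1, -⟩; exact (hu h1).symm
    · rintro rfl; exact ⟨rfl, rfl⟩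
  rw [Finset.sum_congr rfl h1, Finset.sum_congr rfl h2, Finset.sum_ite_eq' Finset.univ k s]
  simp

lemma indSum_xu (hu : Function.Injective u) (hvu : ∀ i j, v i ≠ u j) (t s : Fin n → ℝ)
    {x : V} {k : Fin n} (hx : x ≠ v k) : indSum v u t s (x, u k) = 0 := by
  unfold indSum
  apply Finset.sum_eq_zero
  intro j _
  rw [if_neg, if_neg, add_zero]
  · rw [Prod.ext_iff]; rintro ⟨-, h2⟩; exact hvu j k h2.symm
  · rw [Prod.ext_iff]; rintro ⟨h1, h2⟩
    exact hx (h1.trans (congrArg v (hu h2.symm)))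

lemma indSum_xv (hv : Function.Injective v) (hvu : ∀ i j, v i ≠ u j) (t s : Fin n → ℝ)
    {x : V} {k : Fin n} (hx : x ≠ u k) : indSum v u t s (x, v k) = 0 := by
  unfold indSum
  apply Finset.sum_eq_zero
  intro j _
  rw [if_neg, if_neg, add_zero]
  · rw [Prod.ext_iff]; rintro ⟨h1, h2⟩
    exact hx (h1.trans (congrArg u (hv h2)).symm)
  · rw [Prod.ext_iff]; rintro ⟨-, h2⟩; exact hvu k j h2

lemma indSum_total (t s : Fin n → ℝ) : ∑ c : V × V, indSum v u t s c = ∑ j, (t j + s j) := by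
  unfold indSum
  rw [Finset.sum_comm]
  apply Finset.sum_congr rfl
  intro j _
  rw [Finset.sum_add_distrib, Finset.sum_ite_eq' Finset.univ ((v j : V), (u j : V)) (fun _ => t j),
    Finset.sum_ite_eq' Finset.univ ((u j : V), (v j : V)) (fun _ => s j)]
  simp

lemma indSum_ne_zero (hvu : ∀ i j, v i ≠ u j) (t s : Fin n → ℝ) {c : V × V}
    (h : indSum v u t s c ≠ 0) :
    ∃ j, (c = (v j, u j) ∧ t j ≠ 0) ∨ (c = (u j, v j) ∧ s j ≠ 0) := by
  by_contra hc
  push_neg at hc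
  apply h
  apply Finset.sum_eq_zero
  intro j _
  obtain ⟨h1, h2⟩ := hc j
  by_cases e1 : c = ((v j : V), (u j : V))
  · by_cases e2 : c = ((u j : V), (v j : V))
    · exact absurd ((Prod.ext_iff.mp (e1.symm.trans e2)).1) (hvu j j)
    · rw [if_pos e1, if_neg e2, h1 e1, add_zero]
  · by_cases e2 : c = ((u j : V), (v j : V))
    · rw [if_neg e1, if_pos e2, h2 e2, add_zero]
    · rw [if_neg e1, if_neg e2, add_zero]

lemma indSum_nonneg (t s : Fin n → ℝ) (ht : ∀ j, 0 ≤ t j) (hs : ∀ j, 0 ≤ s j) (c : V × V) :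
    0 ≤ indSum v u t s c := by
  apply Finset.sum_nonneg
  intro j _
  have := ht j; have := hs j
  positivity

end eval

end FS3

namespace FS4

open FS3

variable {V : Type} [Fintype V] [DecidableEq V] {n : ℕ}

def AA (v u : Fin n → V) (f : V × V → ℝ) (j : Fin n) : ℝ := f (v j, u j)

def BB (v u : Fin n → V) (f : V × V → ℝ) (j : Fin n) : ℝ :=
  f (u j, v j) + ∑ x ∈ Finset.univ.erase (v j), f (x, u j)

def phiFun (v u : Fin n → V) (f : V × V → ℝ) : V × V → ℝ :=
  indSum v u (AA v u f) (BB v u f)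

def gFun (v u : Fin n → V) (f : V × V → ℝ) (j : Fin n) : ℝ := AA v u f j - BB v u f j

noncomputable def sFun (v u : Fin n → V) (y : Fin n → ℝ) : V × V → ℝ := fun c =>
  indSum v u (fun j => max (y j) 0) (fun j => max (-y j) 0) c / (∑ j, |y j|)

variable {v u : Fin n → V}

lemma indSum_smul (c : ℝ) (t s : Fin n → ℝ) (ab : V × V) :
    indSum v u (fun j => c * t j) (fun j => c * s j) ab = c * indSum v u t s ab := by
  unfold indSum
  rw [Finset.mul_sum]
  apply Finset.sum_congr rfl
  intro j _
  split_ifs <;> ring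

lemma sFun_smul {c : ℝ} (hc : 0 < c) (y : Fin n → ℝ) :
    sFun v u (fun j => c * y j) = sFun v u y := by
  funext ab
  unfold sFun
  have h1 : (fun j => max (c * y j) 0) = fun j => c * max (y j) 0 := by
    funext j
    rw [mul_max_of_nonneg _ _ hc.le, mul_zero]
  have h2 : (fun j => max (-(c * y j)) 0) = fun j => c * max (-y j) 0 := by
    funext j
    rw [mul_max_of_nonneg _ _ hc.le, mul_zero, mul_neg]
  rw [h1, h2, indSum_smul]
  have h3 : ∑ j, |c * y j| = c * ∑ j, |y j| := by
    rw [Finset.mul_sum]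
    exact Finset.sum_congr rfl fun j _ => by rw [abs_mul, abs_of_pos hc]
  rw [h3, mul_div_mul_left _ _ hc.ne']

lemma sFun_of_compl (hv : Function.Injective v) (hu : Function.Injective u)
    (hvu : ∀ i j, v i ≠ u j) (f : V × V → ℝ)
    (hA : ∀ j, 0 ≤ AA v u f j) (hB : ∀ j, 0 ≤ BB v u f j)
    (hcompl : ∀ j, AA v u f j = 0 ∨ BB v u f j = 0)
    (hsum : ∑ j, (AA v u f j + BB v u f j) = 1) :
    sFun v u (gFun v u f) = phiFun v u f := by
  have habs : ∀ j, |gFun v u f j| = AA v u f j + BB v u f j := by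
    intro j
    unfold gFun
    rcases hcompl j with h | h <;> rw [h]
    · rw [zero_sub, abs_neg, abs_of_nonneg (hB j), zero_add]
    · rw [sub_zero, abs_of_nonneg (hA j), add_zero]
  funext ab
  unfold sFun
  rw [Finset.sum_congr rfl (fun j _ => habs j), hsum, div_one]
  unfold phiFun
  congr 1
  · funext j
    exact (max_compl (hA j) (hB j) (hcompl j)).1
  · funext j
    exact (max_compl (hA j) (hB j) (hcompl j)).2

lemma gFun_sFun (hv : Function.Injective v) (hu : Function.Injective u)
    (hvu : ∀ i j, v i ≠ u j) (y : Fin n → ℝ) :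
    gFun v u (sFun v u y) = fun j => y j / (∑ i, |y i|) := by
  funext j
  unfold gFun AA BB
  have hA : sFun v u y (v j, u j) = max (y j) 0 / (∑ i, |y i|) := by
    unfold sFun; rw [indSum_vu hv hvu]
  have hB1 : sFun v u y (u j, v j) = max (-y j) 0 / (∑ i, |y i|) := by
    unfold sFun; rw [indSum_uv hu hvu]
  have hB2 : ∀ x ∈ Finset.univ.erase (v j), sFun v u y (x, u j) = 0 := by
    intro x hx
    unfold sFun
    rw [indSum_xu hu hvu _ _ (Finset.ne_of_mem_erase hx), zero_div]
  rw [hA, hB1, Finset.sum_congr rfl hB2, Finset.sum_const, smul_zero, add_zero, ← sub_div,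
    max_sub_max]

lemma sFun_nonneg (y : Fin n → ℝ) (c : V × V) : 0 ≤ sFun v u y c := by
  unfold sFun
  apply div_nonneg
  · exact indSum_nonneg _ _ (fun j => le_max_right _ _) (fun j => le_max_right _ _) c
  · exact Finset.sum_nonneg fun j _ => abs_nonneg _

lemma sFun_total (hN : (∑ j, |y j|) ≠ 0) : ∑ c : V × V, sFun v u y c = 1 := by
  unfold sFun
  rw [← Finset.sum_div, indSum_total]
  rw [Finset.sum_congr rfl (fun j _ => max_add_max (y j))]
  exact div_self hN

end FS4


namespace FS5

open ForestSphereAux FS2 FS3 FS4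

variable {V : Type} [Fintype V] [DecidableEq V] {n : ℕ} {G : SimpleGraph V} [DecidableRel G.Adj]
  {v u : Fin n → V}

/-- the geometric realization of the forest complex -/
def XSet (G : SimpleGraph V) [DecidableRel G.Adj] : Set (V × V → ℝ) :=
  geomRealization fun F : Finset (V × V) => IsDirectedForest G.Adj F

lemma nonneg_AA {f : V × V → ℝ} (hf : f ∈ XSet G) (j : Fin n) : 0 ≤ AA v u f j := hf.1 _

lemma nonneg_BB {f : V × V → ℝ} (hf : f ∈ XSet G) (j : Fin n) : 0 ≤ BB v u f j := by
  have := hf.1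
  unfold BB
  have h2 : (0:ℝ) ≤ ∑ x ∈ Finset.univ.erase (v j), f (x, u j) :=
    Finset.sum_nonneg fun x _ => hf.1 _
  have h1 := hf.1 ((u j, v j))
  linarith

lemma compl_AB (hb : IsBasicTree n G v u) {f : V × V → ℝ} (hf : f ∈ XSet G) (j : Fin n) :
    AA v u f j = 0 ∨ BB v u f j = 0 := by
  by_cases hA : f (v j, u j) = 0
  · exact Or.inl hA
  right
  obtain ⟨hpos, hsum, F, hF, hsupp⟩ := hf
  have hvuF : ((v j : V), (u j : V)) ∈ F := hsupp _ hA
  have h1 : f (u j, v j) = 0 := by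
    by_contra h
    exact no_two_cycle hF (hsupp _ h) hvuF
  have h2 : ∀ x ∈ Finset.univ.erase (v j), f (x, u j) = 0 := by
    intro x hx
    by_contra h
    exact (Finset.ne_of_mem_erase hx) (hF.2.1 (u j) x (v j) (hsupp _ h) hvuF)
  unfold BB
  rw [h1, zero_add]
  exact Finset.sum_eq_zero h2

lemma sum_AB (hb : IsBasicTree n G v u) {f : V × V → ℝ} (hf : f ∈ XSet G) :
    ∑ j, (AA v u f j + BB v u f j) = 1 := by
  obtain ⟨hpos, hsum, F, hF, hsupp⟩ := hf
  have key : ∀ j, ∑ x : V, f (x, v j) = f (u j, v j) := by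
    intro j
    apply Finset.sum_eq_single_of_mem (u j) (Finset.mem_univ _)
    intro x _ hx
    by_contra h
    exact hx (adj_leaf hb (hF.1 _ (hsupp _ h)))
  have key2 : ∀ j, ∑ x : V, f (x, u j) = f (v j, u j) + ∑ x ∈ Finset.univ.erase (v j), f (x, u j) := by
    intro j
    exact (Finset.add_sum_erase _ (fun x => f (x, u j)) (Finset.mem_univ (v j))).symm
  have hsum' : ∑ b : V, ∑ a : V, f (a, b) = 1 := by
    rw [← hsum, Fintype.sum_prod_type_right]
  rw [sum_V hb (fun b => ∑ a : V, f (a, b))] at hsum'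
  calc ∑ j, (AA v u f j + BB v u f j)
      = ∑ j, ((∑ x : V, f (x, v j)) + ∑ x : V, f (x, u j)) := by
        apply Finset.sum_congr rfl
        intro j _
        rw [key j, key2 j]
        unfold AA BB
        ring
    _ = (∑ j, ∑ x : V, f (x, v j)) + ∑ j, ∑ x : V, f (x, u j) := Finset.sum_add_distrib
    _ = 1 := hsum'

/-- unpacking membership in the pendant forest of a vector `y` -/
lemma mem_Fy {y : Fin n → ℝ} {a c : V}
    (h : (a, c) ∈ ((Finset.univ.filter fun j => 0 < y j).image fun j => ((v j : V), (u j : V))) ∪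
      ((Finset.univ.filter fun j => y j < 0).image fun j => ((u j : V), (v j : V)))) :
    (∃ j, a = v j ∧ c = u j ∧ 0 < y j) ∨ (∃ j, a = u j ∧ c = v j ∧ y j < 0) := by
  rw [Finset.mem_union] at h
  rcases h with h | h <;> rw [Finset.mem_image] at h <;> obtain ⟨j, hj, hje⟩ := h <;>
    rw [Finset.mem_filter] at hj <;> rw [Prod.ext_iff] at hje
  · exact Or.inl ⟨j, hje.1.symm, hje.2.symm, hj.2⟩
  · exact Or.inr ⟨j, hje.1.symm, hje.2.symm, hj.2⟩

lemma s_mem (hb : IsBasicTree n G v u) {y : Fin n → ℝ} (hy : y ≠ 0) :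
    sFun v u y ∈ XSet G := by
  have hN : (∑ j, |y j|) ≠ 0 := by
    intro h
    apply hy
    funext j
    have := (Finset.sum_eq_zero_iff_of_nonneg (fun j _ => abs_nonneg (y j))).mp h j
      (Finset.mem_univ j)
    exact abs_eq_zero.mp this
  refine ⟨sFun_nonneg y, sFun_total hN, ?_⟩
  refine ⟨((Finset.univ.filter fun j => 0 < y j).image fun j => ((v j : V), (u j : V))) ∪
      ((Finset.univ.filter fun j => y j < 0).image fun j => ((u j : V), (v j : V))), ?_, ?_⟩
  · refine ⟨?_, ?_, ?_⟩
    · rintro ⟨a, c⟩ h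
      rcases mem_Fy h with ⟨j, rfl, rfl, -⟩ | ⟨j, rfl, rfl, -⟩
      · exact hb.adj j
      · exact (hb.adj j).symm
    · intro x a a' h1 h2
      rcases mem_Fy h1 with ⟨j, rfl, hc, -⟩ | ⟨j, rfl, hc, -⟩ <;>
        rcases mem_Fy h2 with ⟨k, rfl, hc', -⟩ | ⟨k, rfl, hc', -⟩
      · exact congrArg v (u_inj hb (hc.symm.trans hc'))
      · exact absurd (hc'.symm.trans hc) (vu_ne hb k j)
      · exact absurd (hc.symm.trans hc') (vu_ne hb j k)
      · exact congrArg u (v_inj hb (hc.symm.trans hc'))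
    · apply no_closed_transfer (F := (∅ : Finset (V × V)))
      · intro x p hp hdi
        cases p with
        | nil => exact hp rfl
        | cons c q => exact absurd hdi.1 (by simp [edgeRel])
      · intro a c hac ⟨d, hcd⟩
        exfalso
        rcases mem_Fy hac with ⟨j, -, rfl, hj⟩ | ⟨j, -, rfl, hj⟩ <;>
          rcases mem_Fy hcd with ⟨k, hc, -, hk⟩ | ⟨k, hc, -, hk⟩
        · exact vu_ne hb k j hc.symm
        · have := u_inj hb hc.symm
          subst this
          exact absurd hj (asymm hk)
        · have := v_inj hb hc.symm
          subst this
          exact absurd hj (asymm hk)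
        · exact vu_ne hb j k hc
  · intro c hc
    have hnum : indSum v u (fun j => max (y j) 0) (fun j => max (-y j) 0) c ≠ 0 := by
      intro h
      apply hc
      unfold sFun
      rw [h, zero_div]
    obtain ⟨j, hj⟩ := indSum_ne_zero (vu_ne hb) _ _ hnum
    rw [Finset.mem_union]
    rcases hj with ⟨rfl, ht⟩ | ⟨rfl, ht⟩
    · left
      rw [Finset.mem_image]
      refine ⟨j, Finset.mem_filter.mpr ⟨Finset.mem_univ _, ?_⟩, rfl⟩
      rcases lt_or_ge 0 (y j) with h | h
      · exact h
      · exact absurd (max_eq_right h) ht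
    · right
      rw [Finset.mem_image]
      refine ⟨j, Finset.mem_filter.mpr ⟨Finset.mem_univ _, ?_⟩, rfl⟩
      rcases lt_or_ge (y j) 0 with h | h
      · exact h
      · exact absurd (max_eq_right (by linarith)) ht


lemma phi_nonneg {f : V × V → ℝ} (hf : f ∈ XSet G) (c : V × V) : 0 ≤ phiFun v u f c :=
  indSum_nonneg _ _ (nonneg_AA hf) (nonneg_BB hf) c

lemma phi_total (hb : IsBasicTree n G v u) {f : V × V → ℝ} (hf : f ∈ XSet G) :
    ∑ c : V × V, phiFun v u f c = 1 := by
  unfold phiFun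
  rw [indSum_total]
  exact sum_AB hb hf

lemma conv_mem (hb : IsBasicTree n G v u) {f : V × V → ℝ} (hf : f ∈ XSet G) {t : ℝ}
    (h0 : 0 ≤ t) (h1 : t ≤ 1) :
    (fun c => (1 - t) * phiFun v u f c + t * f c) ∈ XSet G := by
  obtain ⟨hpos, hsum, F, hF, hsupp⟩ := hf
  have hf' : f ∈ XSet G := ⟨hpos, hsum, F, hF, hsupp⟩
  set F' : Finset (V × V) := F ∪ (Finset.univ.filter fun j => ((v j : V), (u j : V)) ∉ F).image
      (fun j => ((u j : V), (v j : V))) with hF'def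
  have memF' : ∀ {a c : V}, (a, c) ∈ F' →
      (a, c) ∈ F ∨ ∃ j, a = u j ∧ c = v j ∧ ((v j : V), (u j : V)) ∉ F := by
    intro a c h
    rw [hF'def, Finset.mem_union] at h
    rcases h with h | h
    · exact Or.inl h
    · rw [Finset.mem_image] at h
      obtain ⟨j, hj, hje⟩ := h
      rw [Finset.mem_filter] at hj
      rw [Prod.ext_iff] at hje
      exact Or.inr ⟨j, hje.1.symm, hje.2.symm, hj.2⟩
  have hFsub : F ⊆ F' := Finset.subset_union_left
  have himg : ∀ j : Fin n, ((v j : V), (u j : V)) ∉ F → ((u j : V), (v j : V)) ∈ F' := by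
    intro j hj
    rw [hF'def, Finset.mem_union, Finset.mem_image]
    exact Or.inr ⟨j, Finset.mem_filter.mpr ⟨Finset.mem_univ _, hj⟩, rfl⟩
  have hforest : IsDirectedForest G.Adj F' := by
    refine ⟨?_, ?_, ?_⟩
    · rintro ⟨a, c⟩ h
      rcases memF' h with h | ⟨j, rfl, rfl, -⟩
      · exact hF.1 _ h
      · exact (hb.adj j).symm
    · have harcv : ∀ (a : V) (j : Fin n), (a, (v j : V)) ∈ F' → a = u j := by
        intro a j h
        rcases memF' h with h | ⟨k, rfl, hc, -⟩
        · exact adj_leaf hb (hF.1 _ h)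
        · exact (congrArg u (v_inj hb hc)).symm
      intro x a a' h1 h2
      rcases cases_V hb x with ⟨j, rfl⟩ | ⟨j, rfl⟩
      · rw [harcv a j h1, harcv a' j h2]
      · have hIn : ∀ b, (b, (u j : V)) ∈ F' → (b, (u j : V)) ∈ F := by
          intro b h
          rcases memF' h with h | ⟨k, -, hc, -⟩
          · exact h
          · exact absurd hc.symm (vu_ne hb k j)
        exact hF.2.1 (u j) a a' (hIn a h1) (hIn a' h2)
    · apply no_closed_transfer hF.2.2
      rintro a c hac ⟨d, hcd⟩
      rcases memF' hac with h | ⟨j, rfl, rfl, hnot⟩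
      · exact h
      exfalso
      rcases memF' hcd with h | ⟨k, hc, -, -⟩
      · apply hnot
        have hd : d = u j := leaf_adj hb (hF.1 _ h)
        rwa [hd] at h
      · exact vu_ne hb j k hc
  refine ⟨?_, ?_, F', hforest, ?_⟩
  · intro c
    have hp := phi_nonneg (v := v) (u := u) hf' c
    have hq := hpos c
    have ht1 : (0:ℝ) ≤ 1 - t := by linarith
    positivity
  · rw [Finset.sum_add_distrib, ← Finset.mul_sum, ← Finset.mul_sum, phi_total hb hf', hsum]
    ring
  · intro c hc
    have hor : (1 - t) * phiFun v u f c ≠ 0 ∨ t * f c ≠ 0 := by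
      by_contra hcon
      push_neg at hcon
      apply hc
      show (1 - t) * phiFun v u f c + t * f c = 0
      rw [hcon.1, hcon.2, add_zero]
    rcases hor with h | h
    · have hphi : phiFun v u f c ≠ 0 := fun hz => h (by rw [hz, mul_zero])
      obtain ⟨j, hj⟩ := indSum_ne_zero (vu_ne hb) _ _ hphi
      rcases hj with ⟨rfl, ht⟩ | ⟨rfl, ht⟩
      · exact hFsub (hsupp _ ht)
      · by_cases hy : f (u j, v j) = 0
        · have hrest : ∑ x ∈ Finset.univ.erase (v j), f (x, u j) ≠ 0 := by
            intro hr
            apply ht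
            unfold BB
            rw [hy, hr, add_zero]
          obtain ⟨x, hx, hxne⟩ := Finset.exists_ne_zero_of_sum_ne_zero hrest
          have hxF : (x, (u j : V)) ∈ F := hsupp _ hxne
          have hnot : ((v j : V), (u j : V)) ∉ F := by
            intro hin
            exact (Finset.ne_of_mem_erase hx) (hF.2.1 (u j) x (v j) hxF hin)
          exact himg j hnot
        · exact hFsub (hsupp _ hy)
    · have : f c ≠ 0 := fun hz => h (by rw [hz, mul_zero])
      exact hFsub (hsupp _ this)


lemma sFun_g_eq_phi (hb : IsBasicTree n G v u) {f : V × V → ℝ} (hf : f ∈ XSet G) :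
    sFun v u (gFun v u f) = phiFun v u f :=
  sFun_of_compl (v_inj hb) (u_inj hb) (vu_ne hb) f (nonneg_AA hf) (nonneg_BB hf)
    (compl_AB hb hf) (sum_AB hb hf)

lemma sum_abs_g (hb : IsBasicTree n G v u) {f : V × V → ℝ} (hf : f ∈ XSet G) :
    ∑ j, |gFun v u f j| = 1 := by
  have habs : ∀ j, |gFun v u f j| = AA v u f j + BB v u f j := by
    intro j
    unfold gFun
    rcases compl_AB hb hf j with h | h <;> rw [h]
    · rw [zero_sub, abs_neg, abs_of_nonneg (nonneg_BB hf j), zero_add]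
    · rw [sub_zero, abs_of_nonneg (nonneg_AA hf j), add_zero]
  rw [Finset.sum_congr rfl fun j _ => habs j]
  exact sum_AB hb hf

lemma sum_abs_pos {m : ℕ} {y : Fin m → ℝ} (hy : y ≠ 0) : 0 < ∑ j, |y j| := by
  have h0 : (0:ℝ) ≤ ∑ j, |y j| := Finset.sum_nonneg fun j _ => abs_nonneg _
  rcases h0.eq_or_lt with h | h
  · exfalso
    apply hy
    funext j
    exact abs_eq_zero.mp
      ((Finset.sum_eq_zero_iff_of_nonneg (fun j _ => abs_nonneg (y j))).mp h.symm j
        (Finset.mem_univ j))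
  · exact h

lemma g_ne_zero (hb : IsBasicTree n G v u) {f : V × V → ℝ} (hf : f ∈ XSet G) :
    gFun v u f ≠ 0 := by
  intro h
  have := sum_abs_g hb hf
  rw [h] at this
  simp at this

end FS5

/-- For a basic tree `T` with `2n` vertices whose double direction is `D`, the complex of
directed trees `Δ(D)` is homotopy equivalent to the sphere `S^{n-1}` (the unit sphere in
`ℝ^n`). -/
theorem forestComplex_basicTree_sphere {V : Type} [Fintype V] [DecidableEq V] (n : ℕ)
    (hn : 1 ≤ n) (G : SimpleGraph V) [DecidableRel G.Adj] (v u : Fin n → V)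
    (hbasic : IsBasicTree n G v u) :
    Nonempty (ContinuousMap.HomotopyEquiv
      ↥(geomRealization fun F : Finset (V × V) => IsDirectedForest G.Adj F)
      ↥(Metric.sphere (0 : EuclideanSpace ℝ (Fin n)) 1)) := by
  classical
  open ForestSphereAux FS2 FS3 FS4 FS5 in
  · -- the geometric realization as a subtype
    set E := EuclideanSpace.equiv (Fin n) ℝ with hE
    -- the forward map
    have hXeq : (geomRealization fun F : Finset (V × V) => IsDirectedForest G.Adj F) = XSet G := rfl
    -- the underlying forward function
    set G0 : ↥(XSet G) → EuclideanSpace ℝ (Fin n) := fun x =>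
      ‖E.symm (gFun v u x.val)‖⁻¹ • E.symm (gFun v u x.val) with hG0
    have hwne : ∀ x : ↥(XSet G), E.symm (gFun v u x.val) ≠ 0 := by
      intro x h
      apply g_ne_zero hbasic x.2
      have := congrArg E h
      rwa [E.apply_symm_apply, map_zero] at this
    have hnormne : ∀ x : ↥(XSet G), ‖E.symm (gFun v u x.val)‖ ≠ 0 := fun x =>
      (norm_pos_iff.mpr (hwne x)).ne'
    have contg : Continuous fun x : ↥(XSet G) => E.symm (gFun v u x.val) := by
      apply E.symm.continuous.comp
      apply continuous_pi
      intro j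
      unfold gFun AA BB
      apply Continuous.sub
      · exact (continuous_apply _).comp continuous_subtype_val
      · apply Continuous.add
        · exact (continuous_apply _).comp continuous_subtype_val
        · apply continuous_finset_sum
          intro x _
          exact (continuous_apply _).comp continuous_subtype_val
    have contG0 : Continuous G0 := (contg.norm.inv₀ hnormne).smul contg
    have hGmem : ∀ x : ↥(XSet G), G0 x ∈ Metric.sphere (0 : EuclideanSpace ℝ (Fin n)) 1 := by
      intro x
      rw [mem_sphere_zero_iff_norm, hG0, norm_smul, norm_inv, norm_norm]
      exact inv_mul_cancel₀ (hnormne x)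
    set Gmap : C(↥(XSet G), ↥(Metric.sphere (0 : EuclideanSpace ℝ (Fin n)) 1)) :=
      ⟨fun x => ⟨G0 x, hGmem x⟩, contG0.subtype_mk hGmem⟩ with hGmap
    -- the backward map
    have hyne : ∀ y : ↥(Metric.sphere (0 : EuclideanSpace ℝ (Fin n)) 1), E y.val ≠ 0 := by
      intro y h
      have hy0 : y.val = 0 := by
        have := congrArg E.symm h
        rwa [E.symm_apply_apply, map_zero] at this
      have := mem_sphere_zero_iff_norm.mp y.2
      rw [hy0, norm_zero] at this
      exact zero_ne_one this
    have hsmem : ∀ y : ↥(Metric.sphere (0 : EuclideanSpace ℝ (Fin n)) 1),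
        sFun v u (E y.val) ∈ XSet G := fun y => s_mem hbasic (hyne y)
    have conts : Continuous fun y : ↥(Metric.sphere (0 : EuclideanSpace ℝ (Fin n)) 1) =>
        sFun v u (E y.val) := by
      have hw : Continuous fun y : ↥(Metric.sphere (0 : EuclideanSpace ℝ (Fin n)) 1) =>
          E y.val := E.continuous.comp continuous_subtype_val
      apply continuous_pi
      intro c
      unfold sFun
      apply Continuous.div
      · apply continuous_finset_sum
        intro j _
        apply Continuous.add
        · by_cases h : c = ((v j : V), (u j : V)) <;> simp only [h, if_true, if_false, if_pos, if_neg, not_false_iff]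
          · exact ((continuous_apply j).comp hw).max continuous_const
          · exact continuous_const
        · by_cases h : c = ((u j : V), (v j : V)) <;> simp only [h, if_true, if_false, if_pos, if_neg, not_false_iff]
          · exact (((continuous_apply j).comp hw).neg).max continuous_const
          · exact continuous_const
      · apply continuous_finset_sum
        intro j _
        exact ((continuous_apply j).comp hw).abs
      · intro y
        exact (sum_abs_pos (hyne y)).ne'
    set smap : C(↥(Metric.sphere (0 : EuclideanSpace ℝ (Fin n)) 1), ↥(XSet G)) :=
      ⟨fun y => ⟨sFun v u (E y.val), hsmem y⟩, conts.subtype_mk hsmem⟩ with hsmap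
    -- key computation : smap ∘ Gmap = φ
    have hsG : ∀ x : ↥(XSet G), (smap (Gmap x)).val = phiFun v u x.val := by
      intro x
      have h1 : (smap (Gmap x)).val = sFun v u (E (G0 x)) := rfl
      have h2 : E (G0 x) = fun j => ‖E.symm (gFun v u x.val)‖⁻¹ * gFun v u x.val j := by
        funext j
        rw [hG0]
        rw [map_smul, E.apply_symm_apply]
        rfl
      rw [h1, h2, sFun_smul (inv_pos.mpr (norm_pos_iff.mpr (hwne x))),
        sFun_g_eq_phi hbasic x.2]
    -- key computation : Gmap ∘ smap = id
    have hGs : ∀ y : ↥(Metric.sphere (0 : EuclideanSpace ℝ (Fin n)) 1),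
        (Gmap (smap y)).val = y.val := by
      intro y
      have hN : (0:ℝ) < ∑ j, |E y.val j| := sum_abs_pos (hyne y)
      have h1 : gFun v u (sFun v u (E y.val)) = (∑ j, |E y.val j|)⁻¹ • (E y.val) := by
        rw [gFun_sFun (v_inj hbasic) (u_inj hbasic) (vu_ne hbasic)]
        funext j
        rw [Pi.smul_apply, smul_eq_mul, div_eq_inv_mul]
      have h2 : E.symm (gFun v u (smap y).val) = (∑ j, |E y.val j|)⁻¹ • y.val := by
        have h3 : (smap y).val = sFun v u (E y.val) := rfl
        rw [h3, h1, map_smul, E.symm_apply_apply]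
      have h4 : ‖E.symm (gFun v u (smap y).val)‖ = (∑ j, |E y.val j|)⁻¹ := by
        rw [h2, norm_smul, mem_sphere_zero_iff_norm.mp y.2, mul_one, Real.norm_eq_abs,
          abs_of_pos (inv_pos.mpr hN)]
      show G0 (smap y) = y.val
      rw [hG0]
      simp only
      rw [h4, h2, inv_inv, smul_smul, mul_inv_cancel₀ hN.ne', one_smul]
    -- the homotopy from smap ∘ Gmap to the identity
    have hconv : ∀ (t : ℝ), 0 ≤ t → t ≤ 1 → ∀ x : ↥(XSet G),
        (fun c => (1 - t) * phiFun v u x.val c + t * x.val c) ∈ XSet G := by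
      intro t h0 h1 x
      exact conv_mem hbasic x.2 h0 h1
    refine ⟨ContinuousMap.HomotopyEquiv.mk Gmap smap ⟨?_⟩ ?_⟩
    · -- left homotopy
      refine ContinuousMap.Homotopy.mk
        ⟨fun p => ⟨fun c => (1 - (p.1 : ℝ)) * phiFun v u p.2.val c + (p.1 : ℝ) * p.2.val c,
          hconv _ p.1.2.1 p.1.2.2 p.2⟩, ?_⟩ ?_ ?_
      · -- continuity
        apply Continuous.subtype_mk
        apply continuous_pi
        intro c
        have ht : Continuous fun p : ↑unitInterval × ↥(XSet G) => (p.1 : ℝ) :=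
          continuous_subtype_val.comp continuous_fst
        have hev : ∀ d : V × V, Continuous fun p : ↑unitInterval × ↥(XSet G) => p.2.val d :=
          fun d => (continuous_apply d).comp (continuous_subtype_val.comp continuous_snd)
        apply Continuous.add
        · apply Continuous.mul
          · exact (continuous_const.sub ht)
          · unfold phiFun indSum AA BB
            apply continuous_finset_sum
            intro j _
            apply Continuous.add
            · by_cases h : c = ((v j : V), (u j : V)) <;>
                simp only [h, if_true, if_false, if_pos, if_neg, not_false_iff]
              · exact hev _
              · exact continuous_const
            · by_cases h : c = ((u j : V), (v j : V)) <;>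
                simp only [h, if_true, if_false, if_pos, if_neg, not_false_iff]
              · exact (hev _).add (continuous_finset_sum _ fun x _ => hev _)
              · exact continuous_const
        · exact ht.mul (hev c)
      · -- at 0 : smap ∘ Gmap
        intro x
        apply Subtype.ext
        show (fun c => (1 - ((0 : ↑unitInterval) : ℝ)) * phiFun v u x.val c
          + ((0 : ↑unitInterval) : ℝ) * x.val c) = ((smap.comp Gmap) x).val
        rw [show (((0 : ↑unitInterval)) : ℝ) = 0 from rfl]
        have : ((smap.comp Gmap) x).val = phiFun v u x.val := hsG x
        rw [this]
        funext c
        ring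
      · -- at 1 : identity
        intro x
        apply Subtype.ext
        show (fun c => (1 - ((1 : ↑unitInterval) : ℝ)) * phiFun v u x.val c
          + ((1 : ↑unitInterval) : ℝ) * x.val c) = x.val
        rw [show (((1 : ↑unitInterval)) : ℝ) = 1 from rfl]
        funext c
        ring
    · -- right homotopy : an equality
      have : Gmap.comp smap = ContinuousMap.id _ := by
        apply ContinuousMap.ext
        intro y
        exact Subtype.ext (hGs y)
      exact (show (Gmap.comp smap).Homotopic (ContinuousMap.id _) from
        this ▸ ContinuousMap.Homotopic.refl _)
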